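/- Let $m > 1$, $g_i > 0$ with probabilities $q_i > 0$, $\sum_i q_i = 1$, and let $Q(t)$ satisfy the backward recursion $Q(T-1) = \sum_i q_i g_i^{1/m}$, $Q(t) = \sum_i q_i(g_i^{1/(m-1)} + Q(t+1)^{m/(m-1)})^{(m-1)/m}$. Define the value functions $V(E, g, T) = (gE/\lambda)^{1/m}$ and, for $t < T$, $V(E, g, t) = \max_{\alpha \in [0,1]} \big[(g\alpha E/\lambda)^{1/m} + \sum_i q_i V((1-\alpha)E, g_i, t+1)\big]$. Then for all $t \le T-1$, $E \ge 0$, and $g > 0$: $V(E, g, t) = (E/\lambda)^{1/m}\big(g^{1/(m-1)} + Q(t)^{m/(m-1)}\big)^{(m-1)/m}$, attained by $\alpha^*(t) = \frac{g^{1/(m-1)}}{g^{1/(m-1)} + Q(t)^{m/(m-1)}}$. -/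

import Mathlib

open Real Set

lemma hoelder_two (m A B : ℝ) (hm : 1 < m) (hA : 0 < A) (hB : 0 < B) :
    A ^ (m/(m-1)) / (A ^ (m/(m-1)) + B ^ (m/(m-1))) ∈ Icc (0:ℝ) 1 ∧
    A * (A ^ (m/(m-1)) / (A ^ (m/(m-1)) + B ^ (m/(m-1)))) ^ (1/m)
      + B * (1 - A ^ (m/(m-1)) / (A ^ (m/(m-1)) + B ^ (m/(m-1)))) ^ (1/m)
      = (A ^ (m/(m-1)) + B ^ (m/(m-1))) ^ ((m-1)/m) ∧
    ∀ α ∈ Icc (0:ℝ) 1, A * α ^ (1/m) + B * (1-α) ^ (1/m)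
      ≤ (A ^ (m/(m-1)) + B ^ (m/(m-1))) ^ ((m-1)/m) := by
  have hm0 : (0:ℝ) < m := by linarith
  have hm1 : (0:ℝ) < m - 1 := by linarith
  set c := m / (m-1) with hc
  have hc1 : 1 < c := by rw [hc, lt_div_iff₀ hm1]; linarith
  have hAc : 0 < A ^ c := rpow_pos_of_pos hA c
  have hBc : 0 < B ^ c := rpow_pos_of_pos hB c
  have hS : 0 < A ^ c + B ^ c := by linarith
  have hmem : A ^ c / (A ^ c + B ^ c) ∈ Icc (0:ℝ) 1 := by
    constructor
    · positivity
    · rw [div_le_one hS]; linarith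
  have key2 : ∀ x : ℝ, 0 < x →
      x * (x ^ c / (A ^ c + B ^ c)) ^ (1/m) = x ^ c / (A ^ c + B ^ c) ^ (1/m) := by
    intro x hx
    rw [Real.div_rpow (rpow_nonneg hx.le c) hS.le, ← Real.rpow_mul hx.le]
    rw [← mul_div_assoc]
    congr 1
    nth_rewrite 1 [← Real.rpow_one x]
    rw [← Real.rpow_add hx]
    congr 1
    rw [hc]
    field_simp
    ring
  have hexp : 1 - 1/m = (m-1)/m := by field_simp
  refine ⟨hmem, ?_, ?_⟩
  · have h1 : 1 - A ^ c / (A ^ c + B ^ c) = B ^ c / (A ^ c + B ^ c) := by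
      field_simp
      ring
    rw [h1, key2 A hA, key2 B hB, ← add_div, ← hexp,
      Real.rpow_sub hS, Real.rpow_one]
  · rintro α ⟨h0, h1⟩
    have h1' : (0:ℝ) ≤ 1 - α := by linarith
    have conj : Real.HolderConjugate c m := by
      exact ((Real.holderConjugate_iff_eq_conjExponent hm).mpr hc).symm
    have H := Real.inner_le_Lp_mul_Lq_of_nonneg (s := (Finset.univ : Finset (Fin 2)))
      conj (f := ![A, B]) (g := ![α ^ (1/m), (1-α) ^ (1/m)])
      (fun i _ => by fin_cases i <;> simp [hA.le, hB.le])
      (fun i _ => by fin_cases i <;> simp [rpow_nonneg, h0, h1'])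
    simp only [Fin.sum_univ_two, Matrix.cons_val_zero, Matrix.cons_val_one, Matrix.head_cons] at H
    have e1 : (α ^ (1/m)) ^ m = α := by
      rw [← Real.rpow_mul h0, one_div_mul_cancel (ne_of_gt hm0), Real.rpow_one]
    have e2 : ((1-α) ^ (1/m)) ^ m = 1 - α := by
      rw [← Real.rpow_mul h1', one_div_mul_cancel (ne_of_gt hm0), Real.rpow_one]
    rw [e1, e2] at H
    have e3 : α + (1 - α) = 1 := by ring
    rw [e3, Real.one_rpow, mul_one] at H
    have e4 : 1 / c = (m-1)/m := by rw [hc, one_div_div]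
    rwa [e4] at H

theorem stmt_9 (m lam : ℝ) (N T : ℕ) (g q : Fin N → ℝ) (Q : ℕ → ℝ)
    (V : ℝ → ℝ → ℕ → ℝ)
    (hm : 1 < m) (hlam : 0 < lam)
    (hg : ∀ i, 0 < g i) (hq : ∀ i, 0 < q i) (hsum : ∑ i, q i = 1)
    (hT : 1 ≤ T)
    (hQbase : Q (T - 1) = ∑ i, q i * g i ^ (1 / m))
    (hQrec : ∀ t, t + 2 ≤ T →
      Q t = ∑ i, q i * (g i ^ (1 / (m - 1)) + Q (t + 1) ^ (m / (m - 1))) ^ ((m - 1) / m))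
    (hVT : ∀ E gc : ℝ, V E gc T = (gc * E / lam) ^ (1 / m))
    (hV : ∀ (E gc : ℝ) (t : ℕ), t < T →
      V E gc t = sSup ((fun α : ℝ =>
        (gc * α * E / lam) ^ (1 / m) + ∑ i, q i * V ((1 - α) * E) (g i) (t + 1)) ''
        Set.Icc 0 1)) :
    ∀ t, t + 1 ≤ T → ∀ E : ℝ, 0 ≤ E → ∀ gc : ℝ, 0 < gc →
      V E gc t =
        (E / lam) ^ (1 / m) * (gc ^ (1 / (m - 1)) + Q t ^ (m / (m - 1))) ^ ((m - 1) / m) ∧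
      (fun α : ℝ =>
        (gc * α * E / lam) ^ (1 / m) + ∑ i, q i * V ((1 - α) * E) (g i) (t + 1))
          (gc ^ (1 / (m - 1)) / (gc ^ (1 / (m - 1)) + Q t ^ (m / (m - 1)))) =
        V E gc t := by
  have hm0 : (0:ℝ) < m := by linarith
  have hm1 : (0:ℝ) < m - 1 := by linarith
  have hNpos : 0 < N := by
    by_contra h
    have hN0 : N = 0 := by omega
    subst hN0
    simp at hsum
  have huniv : (Finset.univ : Finset (Fin N)).Nonempty := by
    have : Nonempty (Fin N) := Fin.pos_iff_nonempty.mp hNpos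
    exact Finset.univ_nonempty
  -- core step: from the induction data at t+1, conclude the value function at t
  have core : ∀ t, t < T → ∀ E : ℝ, 0 ≤ E → ∀ gc : ℝ, 0 < gc →
      0 < Q t →
      (∀ E' : ℝ, 0 ≤ E' → ∑ i, q i * V E' (g i) (t + 1) = Q t * (E' / lam) ^ (1 / m)) →
      (V E gc t =
        (E / lam) ^ (1 / m) * (gc ^ (1 / (m - 1)) + Q t ^ (m / (m - 1))) ^ ((m - 1) / m) ∧
      (fun α : ℝ =>
        (gc * α * E / lam) ^ (1 / m) + ∑ i, q i * V ((1 - α) * E) (g i) (t + 1))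
          (gc ^ (1 / (m - 1)) / (gc ^ (1 / (m - 1)) + Q t ^ (m / (m - 1)))) =
        V E gc t) := by
    intro t htT E hE gc hgc hQpos hsum'
    set A := gc ^ (1/m) with hAdef
    have hA : 0 < A := rpow_pos_of_pos hgc _
    have hAc : A ^ (m/(m-1)) = gc ^ (1/(m-1)) := by
      rw [hAdef, ← Real.rpow_mul hgc.le]
      congr 1
      field_simp
    obtain ⟨hmem, heq, hub⟩ := hoelder_two m A (Q t) hm hA hQpos
    rw [hAc] at hmem heq hub
    set F : ℝ → ℝ := fun α : ℝ =>
        (gc * α * E / lam) ^ (1 / m) + ∑ i, q i * V ((1 - α) * E) (g i) (t + 1) with hFdef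
    have hElam : (0:ℝ) ≤ E / lam := div_nonneg hE hlam.le
    have hF : ∀ α ∈ Icc (0:ℝ) 1, F α =
        (E / lam) ^ (1/m) * (A * α ^ (1/m) + Q t * (1 - α) ^ (1/m)) := by
      rintro α ⟨h0, h1⟩
      have h1' : (0:ℝ) ≤ 1 - α := by linarith
      have t1 : (gc * α * E / lam) ^ (1/m) = A * α ^ (1/m) * (E/lam) ^ (1/m) := by
        have : gc * α * E / lam = gc * (α * (E / lam)) := by ring
        rw [this, Real.mul_rpow hgc.le (mul_nonneg h0 hElam),
          Real.mul_rpow h0 hElam, hAdef]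
        ring
      have t2 : ∑ i, q i * V ((1 - α) * E) (g i) (t + 1)
          = Q t * ((1-α) ^ (1/m) * (E/lam) ^ (1/m)) := by
        rw [hsum' ((1-α)*E) (mul_nonneg h1' hE)]
        have : (1 - α) * E / lam = (1-α) * (E / lam) := by ring
        rw [this, Real.mul_rpow h1' hElam]
      rw [hFdef]
      simp only []
      rw [t1, t2]
      ring
    have hgreat : IsGreatest (F '' Icc 0 1)
        ((E / lam) ^ (1/m) *
          (gc ^ (1/(m-1)) + Q t ^ (m/(m-1))) ^ ((m-1)/m)) := by
      constructor
      · refine ⟨_, hmem, ?_⟩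
        rw [hF _ hmem, heq]
      · rintro y ⟨α, hα, rfl⟩
        rw [hF α hα]
        exact mul_le_mul_of_nonneg_left (hub α hα) (rpow_nonneg hElam _)
    have hVeq : V E gc t = (E / lam) ^ (1/m) *
        (gc ^ (1/(m-1)) + Q t ^ (m/(m-1))) ^ ((m-1)/m) := by
      rw [hV E gc t htT]
      exact hgreat.csSup_eq
    refine ⟨hVeq, ?_⟩
    show F _ = V E gc t
    rw [hF _ hmem, heq, hVeq]
  -- downward induction packaged as induction on the distance d from the horizon
  have main : ∀ d t, t + 1 + d = T → 0 < Q t ∧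
      (∀ E' : ℝ, 0 ≤ E' → ∑ i, q i * V E' (g i) (t + 1) = Q t * (E' / lam) ^ (1 / m)) := by
    intro d
    induction d with
    | zero =>
      intro t ht
      have htT : t = T - 1 := by omega
      have hQt : Q t = ∑ i, q i * g i ^ (1 / m) := by rw [htT, hQbase]
      constructor
      · rw [hQt]
        exact Finset.sum_pos (fun i _ => mul_pos (hq i) (rpow_pos_of_pos (hg i) _)) huniv
      · intro E' hE'
        have hT' : t + 1 = T := by omega
        rw [hQt, Finset.sum_mul]
        refine Finset.sum_congr rfl fun i _ => ?_
        rw [hT', hVT E' (g i)]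
        have : g i * E' / lam = g i * (E' / lam) := by ring
        rw [this, Real.mul_rpow (hg i).le (div_nonneg hE' hlam.le)]
        ring
    | succ d ih =>
      intro t ht
      obtain ⟨hQ1, hs1⟩ := ih (t+1) (by omega)
      have ht2 : t + 2 ≤ T := by omega
      have hQt : Q t = ∑ i, q i *
          (g i ^ (1 / (m - 1)) + Q (t + 1) ^ (m / (m - 1))) ^ ((m - 1) / m) :=
        hQrec t ht2
      have hterm : ∀ i, (0:ℝ) <
          (g i ^ (1 / (m - 1)) + Q (t + 1) ^ (m / (m - 1))) ^ ((m - 1) / m) := by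
        intro i
        apply rpow_pos_of_pos
        have := rpow_pos_of_pos (hg i) (1/(m-1))
        have := rpow_pos_of_pos hQ1 (m/(m-1))
        linarith
      constructor
      · rw [hQt]
        exact Finset.sum_pos (fun i _ => mul_pos (hq i) (hterm i)) huniv
      · intro E' hE'
        rw [hQt, Finset.sum_mul]
        refine Finset.sum_congr rfl fun i _ => ?_
        have hcore := core (t+1) (by omega) E' hE' (g i) (hg i) hQ1 hs1
        rw [hcore.1]
        ring
  intro t ht E hE gc hgc
  obtain ⟨hQpos, hsum'⟩ := main (T - (t+1)) t (by omega)
  exact core t (by omega) E hE gc hgc hQpos hsum'
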